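/- Let p > 2, a > 0 and 0 ≤ b ≤ p − 1, and let h be the Legendre transform of f(s,t) = (a/p)(|s|^p + 2b|s|^{p/2}|t|^{p/2} + |t|^p). Then h is differentiable and strictly convex on ℝ², and its gradient map ∇h : ℝ² → ℝ² is the inverse of the gradient map ∇f : ℝ² → ℝ², i.e. ∇h ∘ ∇f = id and ∇f ∘ ∇h = id on ℝ². -/

import Mathlib

open Real Set Filter Topology
/-- signed power: `|x|^(c-2) * x`, equals `sign x * |x|^(c-1)`. -/
noncomputable def spow (c x : ℝ) : ℝ := |x| ^ (c - 2) * x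

lemma spow_zero (c : ℝ) : spow c 0 = 0 := by simp [spow]

lemma spow_of_pos {c x : ℝ} (hx : 0 < x) : spow c x = x ^ (c - 1) := by
  rw [spow, abs_of_pos hx]
  rw [show c - 1 = (c - 2) + 1 by ring, Real.rpow_add_one hx.ne']

lemma spow_of_neg {c x : ℝ} (hx : x < 0) : spow c x = -(-x) ^ (c - 1) := by
  rw [spow, abs_of_neg hx]
  rw [show c - 1 = (c - 2) + 1 by ring, Real.rpow_add_one (by linarith : (-x) ≠ 0)]
  ring

lemma spow_nonneg_of_nonneg {c x : ℝ} (hx : 0 ≤ x) : 0 ≤ spow c x :=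
  mul_nonneg (Real.rpow_nonneg (abs_nonneg x) _) hx

lemma spow_neg_of_neg {c x : ℝ} (hx : x < 0) : spow c x < 0 :=
  mul_neg_of_pos_of_neg (Real.rpow_pos_of_pos (abs_pos.2 hx.ne) _) hx

lemma abs_spow_eq {c x : ℝ} (hx : x ≠ 0) : |spow c x| = |x| ^ (c - 1) := by
  rw [spow, abs_mul, abs_rpow_of_nonneg (abs_nonneg x), abs_abs,
    show c - 1 = (c - 2) + 1 by ring, Real.rpow_add_one (abs_ne_zero.2 hx)]

lemma abs_spow_le (c x : ℝ) : |spow c x| ≤ |x| ^ (c - 1) := by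
  rcases eq_or_ne x 0 with rfl | hx
  · simp only [spow_zero, abs_zero]
    positivity
  · exact (abs_spow_eq hx).le

lemma hasDerivAt_abs_rpow' {c : ℝ} (hc : 1 < c) (x : ℝ) :
    HasDerivAt (fun u => |u| ^ c) (c * spow c x) x := by
  simpa [spow, mul_assoc] using hasDerivAt_abs_rpow x hc

lemma hasDerivAt_spow {c : ℝ} {x : ℝ} (hx : x ≠ 0) :
    HasDerivAt (spow c) ((c - 1) * |x| ^ (c - 2)) x := by
  rcases hx.lt_or_gt with hx | hx
  · have h1 : HasDerivAt (fun u : ℝ => -(-u) ^ (c - 1)) (-((c-1) * (-x) ^ (c - 1 - 1) * (-1))) x :=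
      (((Real.hasDerivAt_rpow_const (p := c - 1) (Or.inl (by linarith))).comp x
        (hasDerivAt_neg x))).neg
    have h2 : spow c =ᶠ[nhds x] fun u => -(-u) ^ (c - 1) := by
      filter_upwards [Iio_mem_nhds hx] with u hu
      rw [spow_of_neg hu]
    have := h1.congr_of_eventuallyEq h2
    refine this.congr_deriv ?_
    rw [abs_of_neg hx]
    ring_nf
  · have h1 : HasDerivAt (fun u : ℝ => u ^ (c - 1)) ((c - 1) * x ^ (c - 1 - 1)) x :=
      Real.hasDerivAt_rpow_const (p := c - 1) (Or.inl hx.ne')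
    have h2 : spow c =ᶠ[nhds x] fun u => u ^ (c - 1) := by
      filter_upwards [Ioi_mem_nhds hx] with u hu
      rw [spow_of_pos hu]
    have := h1.congr_of_eventuallyEq h2
    refine this.congr_deriv ?_
    rw [abs_of_pos hx]
    ring_nf

lemma tendsto_abs_rpow_zero {c : ℝ} (hc : 0 < c) :
    Tendsto (fun u : ℝ => |u| ^ c) (nhds 0) (nhds 0) := by
  have h0 : ContinuousAt (fun u : ℝ => u ^ c) |(0:ℝ)| := by
    rw [abs_zero]; exact Real.continuousAt_rpow_const 0 c (Or.inr hc.le)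
  have := h0.comp continuous_abs.continuousAt (x := (0:ℝ))
  simpa [ContinuousAt, Function.comp_def, Real.zero_rpow hc.ne'] using this

lemma continuous_spow {c : ℝ} (hc : 1 < c) : Continuous (spow c) := by
  rw [continuous_iff_continuousAt]
  intro x
  rcases eq_or_ne x 0 with rfl | hx
  · rw [ContinuousAt, spow_zero]
    exact squeeze_zero_norm (fun u => abs_spow_le c u) (tendsto_abs_rpow_zero (by linarith))
  · exact (hasDerivAt_spow hx).continuousAt

lemma continuous_abs_rpow {c : ℝ} (hc : 0 < c) : Continuous (fun u : ℝ => |u| ^ c) := by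
  rw [continuous_iff_continuousAt]
  intro x
  exact (Real.continuousAt_rpow_const |x| c (Or.inr hc.le)).comp continuous_abs.continuousAt

lemma strictMono_spow {c : ℝ} (hc : 1 < c) : StrictMono (spow c) := by
  intro x y hxy
  rcases lt_trichotomy x 0 with hx | rfl | hx
  · rcases lt_trichotomy y 0 with hy | rfl | hy
    · rw [spow_of_neg hx, spow_of_neg hy, neg_lt_neg_iff]
      exact Real.rpow_lt_rpow (by linarith) (by linarith) (by linarith)
    · rw [spow_zero]; exact spow_neg_of_neg hx
    · exact lt_of_lt_of_le (spow_neg_of_neg hx) (spow_nonneg_of_nonneg hy.le)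
  · rw [spow_zero, spow_of_pos hxy]
    positivity
  · rw [spow_of_pos hx, spow_of_pos (hx.trans hxy)]
    exact Real.rpow_lt_rpow hx.le hxy (by linarith)

/-- a continuous function whose derivative is positive off a finite set is strictly mono -/
lemma strictMono_of_deriv_pos_off_finite {φ : ℝ → ℝ} (hc : Continuous φ) (S : Finset ℝ)
    (hd : ∀ t ∉ S, 0 < deriv φ t) : StrictMono φ := by
  classical
  suffices H : ∀ S : Finset ℝ, ∀ x y : ℝ, x < y →
      (∀ t ∈ Set.Ioo x y, t ∉ S → 0 < deriv φ t) → φ x < φ y by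
    intro x y hxy
    exact H S x y hxy fun t _ ht => hd t ht
  intro S
  induction S using Finset.induction_on with
  | empty =>
    intro x y hxy hpos
    refine strictMonoOn_of_deriv_pos (convex_Icc x y) hc.continuousOn ?_
      (left_mem_Icc.2 hxy.le) (right_mem_Icc.2 hxy.le) hxy
    intro t ht
    rw [interior_Icc] at ht
    exact hpos t ht (Finset.notMem_empty t)
  | @insert a S ha IH =>
    intro x y hxy hpos
    by_cases hax : a ∈ Set.Ioo x y
    · have h1 : φ x < φ a := by
        refine IH x a hax.1 fun t ht hts => hpos t ⟨ht.1, ht.2.trans hax.2⟩ ?_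
        simp only [Finset.mem_insert, not_or]
        exact ⟨ne_of_lt ht.2, hts⟩
      have h2 : φ a < φ y := by
        refine IH a y hax.2 fun t ht hts => hpos t ⟨hax.1.trans ht.1, ht.2⟩ ?_
        simp only [Finset.mem_insert, not_or]
        exact ⟨(ne_of_gt ht.1), hts⟩
      exact h1.trans h2
    · refine IH x y hxy fun t ht hts => hpos t ht ?_
      simp only [Finset.mem_insert, not_or]
      exact ⟨fun h => hax (h ▸ ht), hts⟩

noncomputable def Ff (p a b : ℝ) (x : ℝ × ℝ) : ℝ :=
  a / p * (|x.1| ^ p + 2 * b * |x.1| ^ (p / 2) * |x.2| ^ (p / 2) + |x.2| ^ p)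

noncomputable def Gg (p a b : ℝ) (x : ℝ × ℝ) : ℝ × ℝ :=
  (a * (spow p x.1 + b * spow (p / 2) x.1 * |x.2| ^ (p / 2)),
   a * (spow p x.2 + b * spow (p / 2) x.2 * |x.1| ^ (p / 2)))

noncomputable def pairCLM (w : ℝ × ℝ) : (ℝ × ℝ) →L[ℝ] ℝ :=
  w.1 • (ContinuousLinearMap.fst ℝ ℝ ℝ) + w.2 • (ContinuousLinearMap.snd ℝ ℝ ℝ)

lemma pairCLM_apply (w v : ℝ × ℝ) : pairCLM w v = w.1 * v.1 + w.2 * v.2 := by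
  simp [pairCLM]

lemma hasFDerivAt_Ff {p a b : ℝ} (hp : 2 < p) (x : ℝ × ℝ) :
    HasFDerivAt (Ff p a b) (pairCLM (Gg p a b x)) x := by
  have hp1 : (1:ℝ) < p := by linarith
  have hq1 : (1:ℝ) < p / 2 := by linarith
  have h1 : HasFDerivAt (fun y : ℝ × ℝ => |y.1| ^ p)
      ((p * spow p x.1) • (ContinuousLinearMap.fst ℝ ℝ ℝ)) x :=
    (hasDerivAt_abs_rpow' hp1 x.1).comp_hasFDerivAt x (hasFDerivAt_fst)
  have h2 : HasFDerivAt (fun y : ℝ × ℝ => |y.2| ^ p)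
      ((p * spow p x.2) • (ContinuousLinearMap.snd ℝ ℝ ℝ)) x :=
    (hasDerivAt_abs_rpow' hp1 x.2).comp_hasFDerivAt x (hasFDerivAt_snd)
  have h3 : HasFDerivAt (fun y : ℝ × ℝ => |y.1| ^ (p/2))
      ((p/2 * spow (p/2) x.1) • (ContinuousLinearMap.fst ℝ ℝ ℝ)) x :=
    (hasDerivAt_abs_rpow' hq1 x.1).comp_hasFDerivAt x (hasFDerivAt_fst)
  have h4 : HasFDerivAt (fun y : ℝ × ℝ => |y.2| ^ (p/2))
      ((p/2 * spow (p/2) x.2) • (ContinuousLinearMap.snd ℝ ℝ ℝ)) x :=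
    (hasDerivAt_abs_rpow' hq1 x.2).comp_hasFDerivAt x (hasFDerivAt_snd)
  have h5 := ((h3.mul h4).const_mul (2*b))
  have h6 := ((h1.add h5).add h2).const_mul (a/p)
  have hFf : Ff p a b = fun y : ℝ × ℝ =>
      a / p * ((|y.1| ^ p + 2*b*(|y.1| ^ (p/2) * |y.2| ^ (p/2))) + |y.2| ^ p) := by
    funext y; rw [Ff]; ring
  rw [hFf]
  refine h6.congr_fderiv ?_
  apply ContinuousLinearMap.ext
  rintro ⟨v1, v2⟩
  simp only [pairCLM, Gg, ContinuousLinearMap.add_apply, ContinuousLinearMap.smul_apply,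
    ContinuousLinearMap.coe_fst', ContinuousLinearMap.coe_snd', smul_eq_mul]
  field_simp
  ring
section Chunk3
open Real Set Filter Topology

lemma spow_neg_arg (c x : ℝ) : spow c (-x) = -spow c x := by
  simp [spow, abs_neg, mul_neg]

lemma spow_mul_abs (c x : ℝ) : spow c x * |x| ^ c = spow (2*c) x := by
  rcases eq_or_ne x 0 with rfl | hx
  · simp [spow]
  · rw [spow, spow, mul_right_comm, ← Real.rpow_add (abs_pos.2 hx)]
    ring_nf

lemma sq_spow_eq {c x : ℝ} (hx : x ≠ 0) : (spow c x)^2 = |x| ^ (2*c - 2) := by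
  have h := abs_spow_eq (c := c) hx
  rw [← sq_abs, h, ← Real.rpow_natCast (|x| ^ (c-1)) 2, ← Real.rpow_mul (abs_nonneg x)]
  norm_num
  try ring

set_option maxHeartbeats 1000000 in
/-- the key positivity of the quadratic form (Hessian on a line), abstract version -/
lemma key_quadform {p a b : ℝ} (hp : 2 < p) (ha : 0 < a) (hb0 : 0 ≤ b) (hb1 : b ≤ p - 1)
    {m n X Y σ ρ d1 d2 : ℝ} (hm : 0 < m) (hn : 0 < n) (hX : 0 < X) (hY : 0 < Y)
    (hXY : X ≠ Y) (hσ : σ^2 = m*X) (hρ : ρ^2 = n*Y) (hd : ¬ (d1 = 0 ∧ d2 = 0)) :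
    0 < a*(p-1)*(m*X)*d1^2 + a*b*(p/2-1)*(m*Y)*d1^2
      + a*(p-1)*(n*Y)*d2^2 + a*b*(p/2-1)*(n*X)*d2^2
      + 2*a*b*(p/2)*(σ*ρ)*(d1*d2) := by
  have hq1 : (0:ℝ) < p/2 - 1 := by linarith
  have hp1 : (0:ℝ) < p - 1 := by linarith
  set A : ℝ := a*((p-1)*(m*X) + b*(p/2-1)*(m*Y)) with hA
  set B : ℝ := a*((p-1)*(n*Y) + b*(p/2-1)*(n*X)) with hB
  have hApos : 0 < A := by
    have h1 : 0 < (p-1)*(m*X) := mul_pos hp1 (mul_pos hm hX)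
    have h2 : 0 ≤ b*(p/2-1)*(m*Y) :=
      mul_nonneg (mul_nonneg hb0 hq1.le) (mul_pos hm hY).le
    rw [hA]; nlinarith
  have hBpos : 0 < B := by
    have h1 : 0 < (p-1)*(n*Y) := mul_pos hp1 (mul_pos hn hY)
    have h2 : 0 ≤ b*(p/2-1)*(n*X) :=
      mul_nonneg (mul_nonneg hb0 hq1.le) (mul_pos hn hX).le
    rw [hB]; nlinarith
  have hdet : A*B - (a*b*(p/2))^2*(σ*ρ)^2
      = a^2*(p-1)*m*n*((1+b)*(p-1-b)*(X*Y) + b*(p/2-1)*(X-Y)^2) := by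
    have h1 : (σ*ρ)^2 = (m*X)*(n*Y) := by rw [mul_pow, hσ, hρ]
    rw [h1, hA, hB]; ring
  have hXY2 : 0 < (X-Y)^2 := by
    have : X - Y ≠ 0 := sub_ne_zero.2 hXY
    positivity
  have hbracket : 0 < (1+b)*(p-1-b)*(X*Y) + b*(p/2-1)*(X-Y)^2 := by
    rcases lt_or_eq_of_le hb1 with hlt | heq
    · have h1 : 0 < (1+b)*(p-1-b)*(X*Y) := by
        have h3 : 0 < p-1-b := by linarith
        have h4 : 0 < (1:ℝ)+b := by linarith
        exact mul_pos (mul_pos h4 h3) (mul_pos hX hY)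
      have h2 : 0 ≤ b*(p/2-1)*(X-Y)^2 :=
        mul_nonneg (mul_nonneg hb0 hq1.le) hXY2.le
      linarith
    · have hbpos : 0 < b := by rw [heq]; linarith
      have h2 : 0 < b*(p/2-1)*(X-Y)^2 := mul_pos (mul_pos hbpos hq1) hXY2
      have h1 : 0 ≤ (1+b)*(p-1-b)*(X*Y) := by
        have h3 : 0 ≤ p-1-b := by linarith
        have h4 : 0 ≤ (1:ℝ)+b := by linarith
        exact mul_nonneg (mul_nonneg h4 h3) (mul_pos hX hY).le
      linarith
  have hdetpos : (a*b*(p/2))^2*(σ*ρ)^2 < A*B := by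
    have hrhs : 0 < a^2*(p-1)*m*n*((1+b)*(p-1-b)*(X*Y) + b*(p/2-1)*(X-Y)^2) := by
      have : 0 < a^2*(p-1)*m*n := by positivity
      exact mul_pos this hbracket
    linarith [hdet]
  have hgoal : a*(p-1)*(m*X)*d1^2 + a*b*(p/2-1)*(m*Y)*d1^2
      + a*(p-1)*(n*Y)*d2^2 + a*b*(p/2-1)*(n*X)*d2^2
      + 2*a*b*(p/2)*(σ*ρ)*(d1*d2)
      = A*d1^2 + B*d2^2 + 2*(a*b*(p/2))*(σ*ρ)*(d1*d2) := by
    rw [hA, hB]; ring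
  rw [hgoal]
  set C : ℝ := |a*b*(p/2)| * |σ*ρ| with hC
  have hC0 : 0 ≤ C := by positivity
  have hcross : -(C * (2 * |d1| * |d2|)) ≤ 2*(a*b*(p/2))*(σ*ρ)*(d1*d2) := by
    have h1 : |2*(a*b*(p/2))*(σ*ρ)*(d1*d2)| = C * (2 * |d1| * |d2|) := by
      rw [hC]
      simp only [abs_mul]
      rw [abs_two]
      ring
    calc -(C * (2 * |d1| * |d2|)) = -|2*(a*b*(p/2))*(σ*ρ)*(d1*d2)| := by rw [h1]
    _ ≤ 2*(a*b*(p/2))*(σ*ρ)*(d1*d2) := neg_abs_le _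
  have habs : C^2 = (a*b*(p/2))^2*(σ*ρ)^2 := by
    rw [hC, mul_pow, sq_abs, sq_abs]
  rcases eq_or_ne d2 0 with rfl | hd2
  · have hd1 : d1 ≠ 0 := fun h => hd ⟨h, rfl⟩
    have h5 : 0 < A*d1^2 := by positivity
    have h6 : A*d1^2 + B*0^2 + 2*(a*b*(p/2))*(σ*ρ)*(d1*0) = A*d1^2 := by ring
    rw [h6]
    exact h5
  · have hq' : C^2 < A*B := by rw [habs]; exact hdetpos
    have hd2' : 0 < |d2| := abs_pos.2 hd2
    have key : 0 < A*d1^2 + B*d2^2 - C*(2 * |d1| * |d2|) := by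
      have hid : A*(A*d1^2 + B*d2^2 - C*(2 * |d1| * |d2|))
          = (A*|d1| - C*|d2|)^2 + (A*B - C^2)*(|d2| * |d2|) := by
        rw [← sq_abs d1, ← sq_abs d2]; ring
      have h7 : 0 < (A*B - C^2)*(|d2| * |d2|) :=
        mul_pos (by linarith) (mul_pos hd2' hd2')
      have h8 : 0 < A*(A*d1^2 + B*d2^2 - C*(2 * |d1| * |d2|)) := by
        rw [hid]
        nlinarith [sq_nonneg (A*|d1| - C*|d2|)]
      by_contra hE
      push_neg at hE
      nlinarith
    linarith [hcross]

end Chunk3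
section Chunk4
open Real Set Filter Topology

lemma continuous_Gg {p a b : ℝ} (hp : 2 < p) : Continuous (Gg p a b) := by
  have hp1 : (1:ℝ) < p := by linarith
  have hq1 : (1:ℝ) < p/2 := by linarith
  have hq0 : (0:ℝ) < p/2 := by linarith
  have c1 : Continuous fun x : ℝ × ℝ => spow p x.1 := (continuous_spow hp1).comp continuous_fst
  have c2 : Continuous fun x : ℝ × ℝ => spow p x.2 := (continuous_spow hp1).comp continuous_snd
  have c3 : Continuous fun x : ℝ × ℝ => spow (p/2) x.1 :=
    (continuous_spow hq1).comp continuous_fst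
  have c4 : Continuous fun x : ℝ × ℝ => spow (p/2) x.2 :=
    (continuous_spow hq1).comp continuous_snd
  have c5 : Continuous fun x : ℝ × ℝ => |x.1| ^ (p/2) :=
    (continuous_abs_rpow hq0).comp continuous_fst
  have c6 : Continuous fun x : ℝ × ℝ => |x.2| ^ (p/2) :=
    (continuous_abs_rpow hq0).comp continuous_snd
  exact (continuous_const.mul (c1.add ((continuous_const.mul c3).mul c6))).prodMk
    (continuous_const.mul (c2.add ((continuous_const.mul c4).mul c5)))

lemma differentiable_Ff {p a b : ℝ} (hp : 2 < p) : Differentiable ℝ (Ff p a b) :=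
  fun x => (hasFDerivAt_Ff hp x).differentiableAt

lemma hasDerivAt_line {p a b : ℝ} (hp : 2 < p) (x d : ℝ × ℝ) (t : ℝ) :
    HasDerivAt (fun t : ℝ => Ff p a b (x + t • d))
      ((Gg p a b (x + t • d)).1 * d.1 + (Gg p a b (x + t • d)).2 * d.2) t := by
  have hc : HasDerivAt (fun t : ℝ => x + t • d) d t := by
    simpa using ((hasDerivAt_id t).smul_const d).const_add x
  have h2 := HasFDerivAt.comp_hasDerivAt (l := Ff p a b)
    (l' := pairCLM (Gg p a b (x + t • d))) t (hasFDerivAt_Ff hp (x + t • d)) hc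
  simpa [Function.comp_def, pairCLM_apply] using h2

lemma strictMono_mul_spow {c K e x0 : ℝ} (hc : 1 < c) (hK : 0 < K) (he : e ≠ 0) :
    StrictMono (fun t : ℝ => K * e * spow c (x0 + t * e)) := by
  intro t1 t2 hlt
  simp only
  rcases he.lt_or_gt with h' | h'
  · have h1 : x0 + t2 * e < x0 + t1 * e := by nlinarith
    have h2 := strictMono_spow hc h1
    have h3 : K * e < 0 := mul_neg_of_pos_of_neg hK h'
    nlinarith
  · have h1 : x0 + t1 * e < x0 + t2 * e := by nlinarith
    have h2 := strictMono_spow hc h1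
    have h3 : 0 < K * e := mul_pos hK h'
    nlinarith

lemma spow_mul_abs_half {p s : ℝ} : spow (p/2) s * |s| ^ (p/2) = spow p s := by
  have := spow_mul_abs (p/2) s
  rwa [show 2*(p/2) = p by ring] at this

set_option maxHeartbeats 1000000 in
lemma strictMono_line_deriv {p a b : ℝ} (hp : 2 < p) (ha : 0 < a) (hb0 : 0 ≤ b)
    (hb1 : b ≤ p - 1) (x d : ℝ × ℝ) (hd : d ≠ 0) :
    StrictMono (fun t : ℝ =>
      (Gg p a b (x + t • d)).1 * d.1 + (Gg p a b (x + t • d)).2 * d.2) := by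
  classical
  have hp1 : (1:ℝ) < p := by linarith
  have hq1 : (1:ℝ) < p/2 := by linarith
  have hq0 : (p/2 : ℝ) ≠ 0 := ne_of_gt (by linarith)
  have hd' : ¬ (d.1 = 0 ∧ d.2 = 0) := by
    intro ⟨h1, h2⟩
    exact hd (Prod.ext h1 h2)
  have hGeq : (fun t : ℝ =>
      (Gg p a b (x + t • d)).1 * d.1 + (Gg p a b (x + t • d)).2 * d.2)
      = fun t : ℝ =>
        a * d.1 * spow p (x.1 + t * d.1)
        + a * b * d.1 * (spow (p/2) (x.1 + t * d.1) * |x.2 + t * d.2| ^ (p/2))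
        + a * d.2 * spow p (x.2 + t * d.2)
        + a * b * d.2 * (spow (p/2) (x.2 + t * d.2) * |x.1 + t * d.1| ^ (p/2)) := by
    funext t
    simp only [Gg, Prod.fst_add, Prod.snd_add, Prod.smul_fst, Prod.smul_snd, smul_eq_mul]
    ring
  rw [hGeq]
  by_cases hC1 : d.1 = 0 ∧ x.1 = 0
  · have hd2 : d.2 ≠ 0 := fun h2 => hd' ⟨hC1.1, h2⟩
    have heq : (fun t : ℝ =>
        a * d.1 * spow p (x.1 + t * d.1)
        + a * b * d.1 * (spow (p/2) (x.1 + t * d.1) * |x.2 + t * d.2| ^ (p/2))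
        + a * d.2 * spow p (x.2 + t * d.2)
        + a * b * d.2 * (spow (p/2) (x.2 + t * d.2) * |x.1 + t * d.1| ^ (p/2)))
        = fun t : ℝ => a * d.2 * spow p (x.2 + t * d.2) := by
      funext t
      rw [hC1.1, hC1.2]
      simp [spow_zero, Real.zero_rpow hq0]
    rw [heq]
    exact strictMono_mul_spow hp1 ha hd2
  by_cases hC2 : d.2 = 0 ∧ x.2 = 0
  · have hd1 : d.1 ≠ 0 := fun h1 => hd' ⟨h1, hC2.1⟩
    have heq : (fun t : ℝ =>
        a * d.1 * spow p (x.1 + t * d.1)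
        + a * b * d.1 * (spow (p/2) (x.1 + t * d.1) * |x.2 + t * d.2| ^ (p/2))
        + a * d.2 * spow p (x.2 + t * d.2)
        + a * b * d.2 * (spow (p/2) (x.2 + t * d.2) * |x.1 + t * d.1| ^ (p/2)))
        = fun t : ℝ => a * d.1 * spow p (x.1 + t * d.1) := by
      funext t
      rw [hC2.1, hC2.2]
      simp [spow_zero, Real.zero_rpow hq0]
    rw [heq]
    exact strictMono_mul_spow hp1 ha hd1
  by_cases hC3 : d.1 = d.2 ∧ x.1 = x.2
  · have hd1 : d.1 ≠ 0 := fun h1 => hd' ⟨h1, hC3.1 ▸ h1⟩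
    have heq : (fun t : ℝ =>
        a * d.1 * spow p (x.1 + t * d.1)
        + a * b * d.1 * (spow (p/2) (x.1 + t * d.1) * |x.2 + t * d.2| ^ (p/2))
        + a * d.2 * spow p (x.2 + t * d.2)
        + a * b * d.2 * (spow (p/2) (x.2 + t * d.2) * |x.1 + t * d.1| ^ (p/2)))
        = fun t : ℝ => (2 * a * (1 + b)) * d.1 * spow p (x.1 + t * d.1) := by
      funext t
      rw [← hC3.1, ← hC3.2, spow_mul_abs_half]
      ring
    rw [heq]
    exact strictMono_mul_spow hp1 (by positivity) hd1
  by_cases hC4 : d.1 = -d.2 ∧ x.1 = -x.2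
  · have hdd : d.2 = -d.1 := by
      have := hC4.1; linarith
    have hd1 : d.1 ≠ 0 := by
      intro h1
      apply hd'
      refine ⟨h1, ?_⟩
      rw [hdd, h1, neg_zero]
    have heq : (fun t : ℝ =>
        a * d.1 * spow p (x.1 + t * d.1)
        + a * b * d.1 * (spow (p/2) (x.1 + t * d.1) * |x.2 + t * d.2| ^ (p/2))
        + a * d.2 * spow p (x.2 + t * d.2)
        + a * b * d.2 * (spow (p/2) (x.2 + t * d.2) * |x.1 + t * d.1| ^ (p/2)))
        = fun t : ℝ => (2 * a * (1 + b)) * d.1 * spow p (x.1 + t * d.1) := by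
      funext t
      have hτ : x.2 + t * d.2 = -(x.1 + t * d.1) := by
        rw [hdd, hC4.2]; ring
      rw [hτ, spow_neg_arg, spow_neg_arg, abs_neg, neg_mul, spow_mul_abs_half, hdd]
      ring
    rw [heq]
    exact strictMono_mul_spow hp1 (by positivity) hd1
  -- main case
  push_neg at hC1 hC2 hC3 hC4
  set S : Finset ℝ :=
    {-x.1/d.1, -x.2/d.2, (x.2-x.1)/(d.1-d.2), (-x.1-x.2)/(d.1+d.2)} with hS
  have hscont : Continuous fun t : ℝ => x.1 + t * d.1 :=
    continuous_const.add (continuous_id.mul continuous_const)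
  have htcont : Continuous fun t : ℝ => x.2 + t * d.2 :=
    continuous_const.add (continuous_id.mul continuous_const)
  have hcont : Continuous (fun t : ℝ =>
        a * d.1 * spow p (x.1 + t * d.1)
        + a * b * d.1 * (spow (p/2) (x.1 + t * d.1) * |x.2 + t * d.2| ^ (p/2))
        + a * d.2 * spow p (x.2 + t * d.2)
        + a * b * d.2 * (spow (p/2) (x.2 + t * d.2) * |x.1 + t * d.1| ^ (p/2))) := by
    have c1 : Continuous fun t : ℝ => spow p (x.1 + t * d.1) :=
      (continuous_spow hp1).comp hscont
    have c2 : Continuous fun t : ℝ => spow p (x.2 + t * d.2) :=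
      (continuous_spow hp1).comp htcont
    have c3 : Continuous fun t : ℝ => spow (p/2) (x.1 + t * d.1) :=
      (continuous_spow hq1).comp hscont
    have c4 : Continuous fun t : ℝ => spow (p/2) (x.2 + t * d.2) :=
      (continuous_spow hq1).comp htcont
    have c5 : Continuous fun t : ℝ => |x.1 + t * d.1| ^ (p/2) :=
      (continuous_abs_rpow (by linarith)).comp hscont
    have c6 : Continuous fun t : ℝ => |x.2 + t * d.2| ^ (p/2) :=
      (continuous_abs_rpow (by linarith)).comp htcont
    exact (((continuous_const.mul c1).add (continuous_const.mul (c3.mul c6))).add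
      (continuous_const.mul c2)).add (continuous_const.mul (c4.mul c5))
  apply strictMono_of_deriv_pos_off_finite hcont S
  intro t htS
  simp only [hS, Finset.mem_insert, Finset.mem_singleton, not_or] at htS
  obtain ⟨ht1, ht2, ht3, ht4⟩ := htS
  -- nondegeneracy at t
  have hs0 : x.1 + t * d.1 ≠ 0 := by
    intro h0
    rcases eq_or_ne d.1 0 with h | h
    · exact hC1 h (by simpa [h] using h0)
    · apply ht1
      rw [eq_div_iff h]
      linarith
  have ht0 : x.2 + t * d.2 ≠ 0 := by
    intro h0
    rcases eq_or_ne d.2 0 with h | h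
    · exact hC2 h (by simpa [h] using h0)
    · apply ht2
      rw [eq_div_iff h]
      linarith
  have habs : |x.1 + t * d.1| ≠ |x.2 + t * d.2| := by
    intro hAB
    rcases abs_eq_abs.1 hAB with he | he
    · rcases eq_or_ne (d.1 - d.2) 0 with h | h
      · have hdd : d.1 = d.2 := by linarith
        apply hC3 hdd
        rw [hdd] at he
        linarith
      · apply ht3
        rw [eq_div_iff h]
        linear_combination he
    · rcases eq_or_ne (d.1 + d.2) 0 with h | h
      · have hdd : d.1 = -d.2 := by linarith
        apply hC4 hdd
        rw [hdd] at he
        linarith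
      · apply ht4
        rw [eq_div_iff h]
        linear_combination he
  -- derivatives of the pieces
  have hds : HasDerivAt (fun u : ℝ => x.1 + u * d.1) d.1 t := by
    simpa using (hasDerivAt_mul_const d.1).const_add x.1
  have hdτ : HasDerivAt (fun u : ℝ => x.2 + u * d.2) d.2 t := by
    simpa using (hasDerivAt_mul_const d.2).const_add x.2
  have h1 : HasDerivAt (fun u : ℝ => spow p (x.1 + u * d.1))
      ((p-1) * |x.1 + t * d.1| ^ (p-2) * d.1) t := ((hasDerivAt_spow hs0).comp t hds :)
  have h2 : HasDerivAt (fun u : ℝ => spow (p/2) (x.1 + u * d.1))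
      ((p/2-1) * |x.1 + t * d.1| ^ (p/2-2) * d.1) t := ((hasDerivAt_spow hs0).comp t hds :)
  have h3 : HasDerivAt (fun u : ℝ => |x.2 + u * d.2| ^ (p/2))
      ((p/2) * spow (p/2) (x.2 + t * d.2) * d.2) t :=
    ((hasDerivAt_abs_rpow' hq1 (x.2 + t * d.2)).comp t hdτ :)
  have h4 : HasDerivAt (fun u : ℝ => spow p (x.2 + u * d.2))
      ((p-1) * |x.2 + t * d.2| ^ (p-2) * d.2) t := ((hasDerivAt_spow ht0).comp t hdτ :)
  have h5 : HasDerivAt (fun u : ℝ => spow (p/2) (x.2 + u * d.2))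
      ((p/2-1) * |x.2 + t * d.2| ^ (p/2-2) * d.2) t := ((hasDerivAt_spow ht0).comp t hdτ :)
  have h6 : HasDerivAt (fun u : ℝ => |x.1 + u * d.1| ^ (p/2))
      ((p/2) * spow (p/2) (x.1 + t * d.1) * d.1) t :=
    ((hasDerivAt_abs_rpow' hq1 (x.1 + t * d.1)).comp t hds :)
  have hG := ((h1.const_mul (a * d.1)).add ((h2.mul h3).const_mul (a * b * d.1))).add
    ((h4.const_mul (a * d.2)).add ((h5.mul h6).const_mul (a * b * d.2)))
  have hG' : HasDerivAt (fun t : ℝ =>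
        a * d.1 * spow p (x.1 + t * d.1)
        + a * b * d.1 * (spow (p/2) (x.1 + t * d.1) * |x.2 + t * d.2| ^ (p/2))
        + a * d.2 * spow p (x.2 + t * d.2)
        + a * b * d.2 * (spow (p/2) (x.2 + t * d.2) * |x.1 + t * d.1| ^ (p/2)))
      (a * d.1 * ((p-1) * |x.1 + t * d.1| ^ (p-2) * d.1)
        + (a * b * d.1) * (((p/2-1) * |x.1 + t * d.1| ^ (p/2-2) * d.1) * |x.2 + t * d.2| ^ (p/2)
            + spow (p/2) (x.1 + t * d.1) * ((p/2) * spow (p/2) (x.2 + t * d.2) * d.2))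
        + (a * d.2 * ((p-1) * |x.2 + t * d.2| ^ (p-2) * d.2)
          + (a * b * d.2) * (((p/2-1) * |x.2 + t * d.2| ^ (p/2-2) * d.2) * |x.1 + t * d.1| ^ (p/2)
            + spow (p/2) (x.2 + t * d.2) * ((p/2) * spow (p/2) (x.1 + t * d.1) * d.1)))) t := by
    refine (hG.congr_deriv (by ring)).congr_of_eventuallyEq ?_
    filter_upwards with u
    simp only [Pi.add_apply, Pi.mul_apply]
    ring
  rw [hG'.deriv]
  -- now positivity via key_quadform
  set U : ℝ := |x.1 + t * d.1| with hU
  set V : ℝ := |x.2 + t * d.2| with hV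
  have hUpos : 0 < U := abs_pos.2 hs0
  have hVpos : 0 < V := abs_pos.2 ht0
  have hm : 0 < U ^ (p/2-2) := Real.rpow_pos_of_pos hUpos _
  have hn : 0 < V ^ (p/2-2) := Real.rpow_pos_of_pos hVpos _
  have hX : 0 < U ^ (p/2) := Real.rpow_pos_of_pos hUpos _
  have hY : 0 < V ^ (p/2) := Real.rpow_pos_of_pos hVpos _
  have hXY : U ^ (p/2) ≠ V ^ (p/2) := by
    rcases habs.lt_or_gt with h | h
    · exact ne_of_lt (Real.rpow_lt_rpow hUpos.le h (by linarith))
    · exact ne_of_gt (Real.rpow_lt_rpow hVpos.le h (by linarith))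
  have hmsX : U ^ (p/2-2) * U ^ (p/2) = U ^ (p-2) := by
    rw [← Real.rpow_add hUpos]
    congr 1
    ring
  have hntY : V ^ (p/2-2) * V ^ (p/2) = V ^ (p-2) := by
    rw [← Real.rpow_add hVpos]
    congr 1
    ring
  have hσ : (spow (p/2) (x.1 + t * d.1))^2 = U ^ (p/2-2) * U ^ (p/2) := by
    rw [sq_spow_eq hs0, hmsX, show 2*(p/2)-2 = p-2 by ring]
  have hρ : (spow (p/2) (x.2 + t * d.2))^2 = V ^ (p/2-2) * V ^ (p/2) := by
    rw [sq_spow_eq ht0, hntY, show 2*(p/2)-2 = p-2 by ring]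
  have hk := key_quadform hp ha hb0 hb1 hm hn hX hY hXY hσ hρ hd'
  have heq : a * d.1 * ((p-1) * U ^ (p-2) * d.1)
        + (a * b * d.1) * (((p/2-1) * U ^ (p/2-2) * d.1) * V ^ (p/2)
            + spow (p/2) (x.1 + t * d.1) * ((p/2) * spow (p/2) (x.2 + t * d.2) * d.2))
        + (a * d.2 * ((p-1) * V ^ (p-2) * d.2)
          + (a * b * d.2) * (((p/2-1) * V ^ (p/2-2) * d.2) * U ^ (p/2)
            + spow (p/2) (x.2 + t * d.2) * ((p/2) * spow (p/2) (x.1 + t * d.1) * d.1)))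
      = a*(p-1)*(U ^ (p/2-2) * U ^ (p/2))*d.1^2 + a*b*(p/2-1)*(U ^ (p/2-2) * V ^ (p/2))*d.1^2
      + a*(p-1)*(V ^ (p/2-2) * V ^ (p/2))*d.2^2 + a*b*(p/2-1)*(V ^ (p/2-2) * U ^ (p/2))*d.2^2
      + 2*a*b*(p/2)*(spow (p/2) (x.1 + t * d.1) * spow (p/2) (x.2 + t * d.2))*(d.1*d.2) := by
    rw [hmsX, hntY]
    ring
  rw [heq]
  exact hk

lemma strictConvexOn_line {p a b : ℝ} (hp : 2 < p) (ha : 0 < a) (hb0 : 0 ≤ b)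
    (hb1 : b ≤ p - 1) (x d : ℝ × ℝ) (hd : d ≠ 0) :
    StrictConvexOn ℝ Set.univ (fun t : ℝ => Ff p a b (x + t • d)) := by
  have hcont : Continuous (fun t : ℝ => Ff p a b (x + t • d)) := by
    apply (differentiable_Ff (a := a) (b := b) hp).continuous.comp
    exact continuous_const.add (continuous_id.smul continuous_const)
  apply StrictMono.strictConvexOn_univ_of_deriv hcont
  have hderiv : deriv (fun t : ℝ => Ff p a b (x + t • d))
      = fun t : ℝ => (Gg p a b (x + t • d)).1 * d.1 + (Gg p a b (x + t • d)).2 * d.2 :=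
    funext fun t => (hasDerivAt_line hp x d t).deriv
  rw [hderiv]
  exact strictMono_line_deriv hp ha hb0 hb1 x d hd

lemma strictConvexOn_Ff {p a b : ℝ} (hp : 2 < p) (ha : 0 < a) (hb0 : 0 ≤ b)
    (hb1 : b ≤ p - 1) : StrictConvexOn ℝ Set.univ (Ff p a b) := by
  refine ⟨convex_univ, fun x _ y _ hxy α β hα hβ hαβ => ?_⟩
  have hline := strictConvexOn_line hp ha hb0 hb1 x (y - x) (sub_ne_zero.2 (Ne.symm hxy))
  have h2 := hline.2 (Set.mem_univ (0:ℝ)) (Set.mem_univ (1:ℝ)) (by norm_num) hα hβ hαβ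
  simp only [smul_eq_mul, mul_zero, mul_one, zero_add] at h2
  have e0 : x + (0:ℝ) • (y - x) = x := by simp
  have e1 : x + (1:ℝ) • (y - x) = y := by simp
  have eβ : x + β • (y - x) = α • x + β • y := by
    have hα1 : α = 1 - β := by linarith
    rw [hα1, sub_smul, one_smul, smul_sub]
    abel
  rw [e0, e1, eβ] at h2
  exact h2

end Chunk4
section Chunk5a
open Real Set Filter Topology

/-- the objective in the Legendre transform -/
noncomputable def Obj (p a b : ℝ) (z u : ℝ × ℝ) : ℝ := u.1 * z.1 + u.2 * z.2 - Ff p a b u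

lemma Ff_zero {p a b : ℝ} (hp : 2 < p) : Ff p a b 0 = 0 := by
  have h1 : (p:ℝ) ≠ 0 := by positivity
  have h2 : (p/2:ℝ) ≠ 0 := by positivity
  simp [Ff, Real.zero_rpow h1, Real.zero_rpow h2]

lemma Obj_zero {p a b : ℝ} (hp : 2 < p) (z : ℝ × ℝ) : Obj p a b z 0 = 0 := by
  simp [Obj, Ff_zero hp]

lemma continuous_Obj {p a b : ℝ} (hp : 2 < p) (z : ℝ × ℝ) : Continuous (Obj p a b z) := by
  have h1 : Continuous (Ff p a b) := (differentiable_Ff hp).continuous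
  exact ((continuous_fst.mul continuous_const).add
    (continuous_snd.mul continuous_const)).sub h1

lemma Ff_ge {p a b : ℝ} (hp : 2 < p) (ha : 0 < a) (hb0 : 0 ≤ b) (u : ℝ × ℝ) :
    a/p * ‖u‖ ^ p ≤ Ff p a b u := by
  have hc : 0 < a/p := by positivity
  have hnorm : ‖u‖ = max |u.1| |u.2| := by
    rw [Prod.norm_def, Real.norm_eq_abs, Real.norm_eq_abs]
  have hmid : 0 ≤ 2 * b * |u.1| ^ (p/2) * |u.2| ^ (p/2) := by positivity
  have hmax : ‖u‖ ^ p ≤ |u.1| ^ p + |u.2| ^ p := by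
    rw [hnorm]
    rcases max_cases |u.1| |u.2| with ⟨h1, _⟩ | ⟨h1, _⟩ <;> rw [h1]
    · nlinarith [Real.rpow_nonneg (abs_nonneg u.2) p]
    · nlinarith [Real.rpow_nonneg (abs_nonneg u.1) p]
  rw [Ff]
  nlinarith

lemma Obj_le {p a b : ℝ} (hp : 2 < p) (ha : 0 < a) (hb0 : 0 ≤ b) (z u : ℝ × ℝ) :
    Obj p a b z u ≤ ‖u‖ * (|z.1| + |z.2|) - a/p * ‖u‖ ^ p := by
  have h1 : u.1 * z.1 ≤ ‖u‖ * |z.1| := by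
    calc u.1 * z.1 ≤ |u.1 * z.1| := le_abs_self _
    _ = |u.1| * |z.1| := abs_mul _ _
    _ ≤ ‖u‖ * |z.1| := by
        have h : |u.1| ≤ ‖u‖ := by
          rw [← Real.norm_eq_abs]; exact norm_fst_le u
        exact mul_le_mul_of_nonneg_right h (abs_nonneg _)
  have h2 : u.2 * z.2 ≤ ‖u‖ * |z.2| := by
    calc u.2 * z.2 ≤ |u.2 * z.2| := le_abs_self _
    _ = |u.2| * |z.2| := abs_mul _ _
    _ ≤ ‖u‖ * |z.2| := by
        have h : |u.2| ≤ ‖u‖ := by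
          rw [← Real.norm_eq_abs]; exact norm_snd_le u
        exact mul_le_mul_of_nonneg_right h (abs_nonneg _)
  have h3 := Ff_ge hp ha hb0 u
  rw [Obj]
  nlinarith

lemma Obj_neg_of_large {p a b : ℝ} (hp : 2 < p) (ha : 0 < a) (hb0 : 0 ≤ b) (z u : ℝ × ℝ)
    (hu : ((|z.1| + |z.2| + 1)/(a/p)) ^ (1/(p-1)) + 1 ≤ ‖u‖) : Obj p a b z u < 0 := by
  have hc : 0 < a/p := by positivity
  set M : ℝ := |z.1| + |z.2| with hM
  have hM0 : 0 ≤ M := by positivity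
  set B : ℝ := ((M + 1)/(a/p)) ^ (1/(p-1)) with hB
  have hB0 : 0 < B := Real.rpow_pos_of_pos (by positivity) _
  have hu1 : 1 ≤ ‖u‖ := by linarith
  have hup : 0 < ‖u‖ := by linarith
  have hp1 : (p - 1) ≠ 0 := ne_of_gt (by linarith)
  have hBp : B ^ (p-1) = (M + 1)/(a/p) := by
    rw [hB, ← Real.rpow_mul (by positivity : (0:ℝ) ≤ (M + 1)/(a/p)),
      show (1/(p-1))*(p-1) = 1 by field_simp, Real.rpow_one]
  have hpow : (M + 1)/(a/p) ≤ ‖u‖ ^ (p-1) := by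
    rw [← hBp]
    exact Real.rpow_le_rpow hB0.le (by linarith) (by linarith)
  have hmul : M + 1 ≤ a/p * ‖u‖ ^ (p-1) := by
    rw [div_le_iff₀ hc] at hpow
    linarith [hpow]
  have hsplit : ‖u‖ ^ p = ‖u‖ ^ (p-1) * ‖u‖ := by
    rw [← Real.rpow_add_one (by positivity : ‖u‖ ≠ 0) (p-1),
      show p - 1 + 1 = p by ring]
  have h4 := Obj_le hp ha hb0 z u
  rw [hsplit] at h4
  have hpow0 : 0 < ‖u‖ ^ (p-1) := Real.rpow_pos_of_pos hup _
  nlinarith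

/-- existence of a global maximizer of the Legendre objective -/
lemma exists_isMaxOn_Obj {p a b : ℝ} (hp : 2 < p) (ha : 0 < a) (hb0 : 0 ≤ b) (z : ℝ × ℝ) :
    ∃ u, IsMaxOn (Obj p a b z) Set.univ u := by
  set R : ℝ := ((|z.1| + |z.2| + 1)/(a/p)) ^ (1/(p-1)) + 1 with hR
  have hR0 : 0 < R := by
    have h : (0:ℝ) < ((|z.1| + |z.2| + 1)/(a/p)) ^ (1/(p-1)) :=
      Real.rpow_pos_of_pos (by positivity) _
    rw [hR]
    linarith
  have hcomp : IsCompact (Metric.closedBall (0:ℝ×ℝ) R) := isCompact_closedBall _ _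
  have hne : (Metric.closedBall (0:ℝ×ℝ) R).Nonempty := ⟨0, Metric.mem_closedBall_self hR0.le⟩
  obtain ⟨u₀, hu₀mem, hu₀max⟩ := hcomp.exists_isMaxOn hne (continuous_Obj hp z).continuousOn
  refine ⟨u₀, fun v _ => ?_⟩
  rcases le_or_gt ‖v‖ R with hv | hv
  · exact hu₀max (by simpa [Metric.mem_closedBall, dist_zero_right] using hv)
  · have h1 : Obj p a b z v < 0 := Obj_neg_of_large hp ha hb0 z v hv.le
    have h2 : Obj p a b z 0 ≤ Obj p a b z u₀ :=
      hu₀max (Metric.mem_closedBall_self hR0.le)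
    rw [Obj_zero hp] at h2
    simp only [Set.mem_setOf_eq]
    linarith

/-- explicit norm bound for maximizers -/
lemma isMaxOn_norm_lt {p a b : ℝ} (hp : 2 < p) (ha : 0 < a) (hb0 : 0 ≤ b) {z u : ℝ × ℝ}
    (hmax : IsMaxOn (Obj p a b z) Set.univ u) :
    ‖u‖ < ((|z.1| + |z.2| + 1)/(a/p)) ^ (1/(p-1)) + 1 := by
  by_contra hcon
  push_neg at hcon
  have h1 : Obj p a b z u < 0 := Obj_neg_of_large hp ha hb0 z u hcon
  have h2 : Obj p a b z 0 ≤ Obj p a b z u := hmax (Set.mem_univ 0)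
  rw [Obj_zero hp] at h2
  linarith

/-- first-order condition at a maximizer -/
lemma Gg_eq_of_isMaxOn {p a b : ℝ} (hp : 2 < p) {z u : ℝ × ℝ}
    (hmax : IsMaxOn (Obj p a b z) Set.univ u) : Gg p a b u = z := by
  have hlin : HasFDerivAt (fun v : ℝ × ℝ => v.1 * z.1 + v.2 * z.2) (pairCLM z) u := by
    have h0 : HasFDerivAt (fun v : ℝ × ℝ => pairCLM z v) (pairCLM z) u :=
      (pairCLM z).hasFDerivAt
    apply h0.congr_of_eventuallyEq
    filter_upwards with v
    rw [pairCLM_apply]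
    ring
  have hobj : HasFDerivAt (Obj p a b z) (pairCLM z - pairCLM (Gg p a b u)) u :=
    hlin.sub (hasFDerivAt_Ff hp u)
  have hloc : IsLocalMax (Obj p a b z) u := hmax.isLocalMax Filter.univ_mem
  have hz := hloc.fderiv_eq_zero
  rw [hobj.fderiv] at hz
  have e1 := congrArg (fun L : (ℝ×ℝ) →L[ℝ] ℝ => L (1, 0)) hz
  have e2 := congrArg (fun L : (ℝ×ℝ) →L[ℝ] ℝ => L (0, 1)) hz
  simp only [ContinuousLinearMap.sub_apply, ContinuousLinearMap.zero_apply,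
    pairCLM_apply] at e1 e2
  have hz1 : (Gg p a b u).1 = z.1 := by linarith
  have hz2 : (Gg p a b u).2 = z.2 := by linarith
  exact Prod.ext hz1 hz2

/-- uniqueness of maximizers -/
lemma isMaxOn_unique {p a b : ℝ} (hp : 2 < p) (ha : 0 < a) (hb0 : 0 ≤ b) (hb1 : b ≤ p - 1)
    {z u₁ u₂ : ℝ × ℝ} (h1 : IsMaxOn (Obj p a b z) Set.univ u₁)
    (h2 : IsMaxOn (Obj p a b z) Set.univ u₂) : u₁ = u₂ := by
  by_contra hne
  have hs := (strictConvexOn_Ff hp ha hb0 hb1).2 (Set.mem_univ u₁) (Set.mem_univ u₂) hne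
    (by norm_num : (0:ℝ) < 1/2) (by norm_num : (0:ℝ) < 1/2) (by norm_num)
  have hv : Obj p a b z u₁ = Obj p a b z u₂ :=
    le_antisymm (h2 (Set.mem_univ u₁)) (h1 (Set.mem_univ u₂))
  have hmid := h1 (Set.mem_univ ((1/2 : ℝ) • u₁ + (1/2 : ℝ) • u₂))
  simp only [Set.mem_setOf_eq] at hmid
  simp only [Obj] at hmid hv
  have hfst : ((1/2 : ℝ) • u₁ + (1/2 : ℝ) • u₂).1 = (1/2) * u₁.1 + (1/2) * u₂.1 := by
    simp [Prod.smul_fst]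
  have hsnd : ((1/2 : ℝ) • u₁ + (1/2 : ℝ) • u₂).2 = (1/2) * u₁.2 + (1/2) * u₂.2 := by
    simp [Prod.smul_snd]
  rw [hfst, hsnd] at hmid
  simp only [smul_eq_mul] at hs
  linarith

/-- gradient condition implies maximizer (by convexity) -/
lemma isMaxOn_of_Gg {p a b : ℝ} (hp : 2 < p) (ha : 0 < a) (hb0 : 0 ≤ b) (hb1 : b ≤ p - 1)
    (u : ℝ × ℝ) : IsMaxOn (Obj p a b (Gg p a b u)) Set.univ u := by
  intro v _
  simp only [Set.mem_setOf_eq]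
  rcases eq_or_ne v u with rfl | hne
  · exact le_refl _
  have hd : v - u ≠ 0 := sub_ne_zero.2 hne
  have hconv := (strictConvexOn_line hp ha hb0 hb1 u (v - u) hd).convexOn
  have hg0 : HasDerivAt (fun t : ℝ => Ff p a b (u + t • (v - u)))
      ((Gg p a b (u + (0:ℝ) • (v - u))).1 * (v - u).1
        + (Gg p a b (u + (0:ℝ) • (v - u))).2 * (v - u).2) 0 := hasDerivAt_line hp u (v - u) 0
  have he0 : u + (0:ℝ) • (v - u) = u := by simp
  have he1 : u + (1:ℝ) • (v - u) = v := by simp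
  have hslope := hconv.deriv_le_slope (Set.mem_univ (0:ℝ)) (Set.mem_univ (1:ℝ))
    zero_lt_one hg0.differentiableAt
  rw [hg0.deriv] at hslope
  rw [slope_def_field] at hslope
  simp only [he0, he1, sub_zero, div_one] at hslope
  -- hslope : (Gg u).1 * (v-u).1 + (Gg u).2 * (v-u).2 ≤ Ff v - Ff u
  simp only [Obj]
  simp only [Prod.fst_sub, Prod.snd_sub] at hslope
  nlinarith [hslope]

end Chunk5a
section Chunk5b
open Real Set Filter Topology

open scoped Classical in
noncomputable def Leg (p a b : ℝ) (z : ℝ × ℝ) : ℝ × ℝ :=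
  if h : ∃ u, IsMaxOn (Obj p a b z) Set.univ u then h.choose else 0

noncomputable def hFun (p a b : ℝ) (z : ℝ × ℝ) : ℝ := ⨆ st : ℝ × ℝ, Obj p a b z st

lemma Leg_isMaxOn {p a b : ℝ} (hp : 2 < p) (ha : 0 < a) (hb0 : 0 ≤ b) (z : ℝ × ℝ) :
    IsMaxOn (Obj p a b z) Set.univ (Leg p a b z) := by
  have h := exists_isMaxOn_Obj hp ha hb0 z
  rw [Leg, dif_pos h]
  exact h.choose_spec

lemma hFun_eq {p a b : ℝ} (hp : 2 < p) (ha : 0 < a) (hb0 : 0 ≤ b) (z : ℝ × ℝ) :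
    hFun p a b z = Obj p a b z (Leg p a b z) := by
  have hmax := Leg_isMaxOn hp ha hb0 z
  refine le_antisymm (ciSup_le fun st => hmax (Set.mem_univ st)) ?_
  exact le_ciSup ⟨Obj p a b z (Leg p a b z), by
    rintro w ⟨st, rfl⟩
    exact hmax (Set.mem_univ st)⟩ (Leg p a b z)

lemma Obj_le_hFun {p a b : ℝ} (hp : 2 < p) (ha : 0 < a) (hb0 : 0 ≤ b) (z v : ℝ × ℝ) :
    Obj p a b z v ≤ hFun p a b z := by
  rw [hFun_eq hp ha hb0]
  exact Leg_isMaxOn hp ha hb0 z (Set.mem_univ v)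

lemma Leg_Gg {p a b : ℝ} (hp : 2 < p) (ha : 0 < a) (hb0 : 0 ≤ b) (hb1 : b ≤ p - 1)
    (q : ℝ × ℝ) : Leg p a b (Gg p a b q) = q :=
  isMaxOn_unique hp ha hb0 hb1 (Leg_isMaxOn hp ha hb0 _) (isMaxOn_of_Gg hp ha hb0 hb1 q)

lemma Gg_Leg {p a b : ℝ} (hp : 2 < p) (ha : 0 < a) (hb0 : 0 ≤ b) (z : ℝ × ℝ) :
    Gg p a b (Leg p a b z) = z :=
  Gg_eq_of_isMaxOn hp (Leg_isMaxOn hp ha hb0 z)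

set_option maxHeartbeats 1000000 in
/-- local uniform continuity-style estimate for the maximizer map -/
lemma Leg_near {p a b : ℝ} (hp : 2 < p) (ha : 0 < a) (hb0 : 0 ≤ b) (hb1 : b ≤ p - 1)
    (y : ℝ × ℝ) {ε : ℝ} (hε : 0 < ε) :
    ∃ δ > 0, ∀ z : ℝ × ℝ, ‖z - y‖ < δ → ‖Leg p a b z - Leg p a b y‖ ≤ ε := by
  have hc : 0 < a/p := by positivity
  set R : ℝ := ((|y.1| + |y.2| + 3)/(a/p)) ^ (1/(p-1)) + 1 with hR
  have hRpow : 0 < ((|y.1| + |y.2| + 3)/(a/p)) ^ (1/(p-1)) :=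
    Real.rpow_pos_of_pos (by positivity) _
  have hR1 : 1 ≤ R := by rw [hR]; linarith
  have hR0 : 0 < R := by linarith
  have hRbound : ∀ z : ℝ × ℝ, ‖z - y‖ ≤ 1 → ‖Leg p a b z‖ ≤ R := by
    intro z hz
    have h1 := isMaxOn_norm_lt hp ha hb0 (Leg_isMaxOn hp ha hb0 z)
    have hz1 : |z.1 - y.1| ≤ ‖z - y‖ := by
      rw [← Real.norm_eq_abs, show z.1 - y.1 = (z - y).1 from rfl]
      exact norm_fst_le (z - y)
    have hz2 : |z.2 - y.2| ≤ ‖z - y‖ := by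
      rw [← Real.norm_eq_abs, show z.2 - y.2 = (z - y).2 from rfl]
      exact norm_snd_le (z - y)
    have h2 : |z.1| ≤ |y.1| + 1 := by
      calc |z.1| = |y.1 + (z.1 - y.1)| := by ring_nf
      _ ≤ |y.1| + |z.1 - y.1| := abs_add_le _ _
      _ ≤ |y.1| + 1 := by linarith
    have h3 : |z.2| ≤ |y.2| + 1 := by
      calc |z.2| = |y.2 + (z.2 - y.2)| := by ring_nf
      _ ≤ |y.2| + |z.2 - y.2| := abs_add_le _ _
      _ ≤ |y.2| + 1 := by linarith
    have hnum : |z.1| + |z.2| + 1 ≤ |y.1| + |y.2| + 3 := by linarith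
    have hmono : ((|z.1| + |z.2| + 1)/(a/p)) ^ (1/(p-1))
        ≤ ((|y.1| + |y.2| + 3)/(a/p)) ^ (1/(p-1)) :=
      Real.rpow_le_rpow (by positivity) (by gcongr)
        (div_nonneg zero_le_one (by linarith))
    rw [hR]
    linarith
  have hyR : ‖Leg p a b y‖ ≤ R := hRbound y (by simp)
  have hpert : ∀ z v : ℝ × ℝ, ‖v‖ ≤ R → |Obj p a b z v - Obj p a b y v| ≤ 2*R*‖z - y‖ := by
    intro z v hv
    have he : Obj p a b z v - Obj p a b y v = v.1*(z.1 - y.1) + v.2*(z.2 - y.2) := by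
      simp only [Obj]
      ring
    have hv1 : |v.1| ≤ R := by
      refine le_trans ?_ hv
      rw [← Real.norm_eq_abs]; exact norm_fst_le v
    have hv2 : |v.2| ≤ R := by
      refine le_trans ?_ hv
      rw [← Real.norm_eq_abs]; exact norm_snd_le v
    have hz1 : |z.1 - y.1| ≤ ‖z - y‖ := by
      rw [← Real.norm_eq_abs, show z.1 - y.1 = (z - y).1 from rfl]
      exact norm_fst_le (z - y)
    have hz2 : |z.2 - y.2| ≤ ‖z - y‖ := by
      rw [← Real.norm_eq_abs, show z.2 - y.2 = (z - y).2 from rfl]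
      exact norm_snd_le (z - y)
    rw [he]
    calc |v.1*(z.1 - y.1) + v.2*(z.2 - y.2)|
        ≤ |v.1*(z.1 - y.1)| + |v.2*(z.2 - y.2)| := abs_add_le _ _
    _ = |v.1| * |z.1 - y.1| + |v.2| * |z.2 - y.2| := by rw [abs_mul, abs_mul]
    _ ≤ 2*R*‖z - y‖ := by
        have h5 : |v.1| * |z.1 - y.1| ≤ R*‖z - y‖ :=
          mul_le_mul hv1 hz1 (abs_nonneg _) hR0.le
        have h6 : |v.2| * |z.2 - y.2| ≤ R*‖z - y‖ :=
          mul_le_mul hv2 hz2 (abs_nonneg _) hR0.le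
        linarith
  set K := Metric.closedBall (0:ℝ×ℝ) R \ Metric.ball (Leg p a b y) ε with hK
  have hKcomp : IsCompact K := (isCompact_closedBall _ _).diff Metric.isOpen_ball
  by_cases hKne : K.Nonempty
  · obtain ⟨u₀, hu₀K, hu₀max⟩ :=
      hKcomp.exists_isMaxOn hKne (continuous_Obj hp y).continuousOn
    have hu₀lt : Obj p a b y u₀ < Obj p a b y (Leg p a b y) := by
      have hle : Obj p a b y u₀ ≤ Obj p a b y (Leg p a b y) :=
        Leg_isMaxOn hp ha hb0 y (Set.mem_univ u₀)
      rcases lt_or_eq_of_le hle with h | h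
      · exact h
      · exfalso
        have hg : IsMaxOn (Obj p a b y) Set.univ u₀ := by
          intro v _
          simp only [Set.mem_setOf_eq]
          exact (Leg_isMaxOn hp ha hb0 y (Set.mem_univ v)).trans h.ge
        have hEq := isMaxOn_unique hp ha hb0 hb1 hg (Leg_isMaxOn hp ha hb0 y)
        apply hu₀K.2
        rw [hEq]
        exact Metric.mem_ball_self hε
    set η : ℝ := Obj p a b y (Leg p a b y) - Obj p a b y u₀ with hη
    have hη0 : 0 < η := by rw [hη]; linarith
    refine ⟨min 1 (η/(4*R+1)), by positivity, fun z hz => ?_⟩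
    have hz1 : ‖z - y‖ ≤ 1 := le_of_lt (lt_of_lt_of_le hz (min_le_left _ _))
    have hz2 : ‖z - y‖ < η/(4*R+1) := lt_of_lt_of_le hz (min_le_right _ _)
    have hzLeg : ‖Leg p a b z‖ ≤ R := hRbound z hz1
    by_contra hcon
    push_neg at hcon
    have hKz : Leg p a b z ∈ K := by
      constructor
      · simpa [Metric.mem_closedBall, dist_zero_right] using hzLeg
      · intro hball
        rw [mem_ball_iff_norm] at hball
        linarith
    have h5 : Obj p a b y (Leg p a b z) ≤ Obj p a b y u₀ := hu₀max hKz
    have h6 : Obj p a b z (Leg p a b y) ≤ Obj p a b z (Leg p a b z) :=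
      Leg_isMaxOn hp ha hb0 z (Set.mem_univ _)
    have h7 := hpert z (Leg p a b y) hyR
    have h8 := hpert z (Leg p a b z) hzLeg
    have h7' := abs_le.1 h7
    have h8' := abs_le.1 h8
    have hchain : η ≤ 4*R*‖z - y‖ := by
      rw [hη]
      linarith [h7'.1, h7'.2, h8'.1, h8'.2]
    have hfinal : 4*R*‖z - y‖ < η := by
      have h9 : 4*R*‖z - y‖ < 4*R*(η/(4*R+1)) := by
        apply mul_lt_mul_of_pos_left hz2 (by linarith)
      have h10 : 4*R*(η/(4*R+1)) < η := by
        rw [← mul_div_assoc]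
        rw [div_lt_iff₀ (by linarith : (0:ℝ) < 4*R+1)]
        nlinarith [hη0, hR0]
      exact lt_trans h9 h10
    linarith
  · refine ⟨1, one_pos, fun z hz => ?_⟩
    have hmem : Leg p a b z ∈ Metric.closedBall (0:ℝ×ℝ) R := by
      simpa [Metric.mem_closedBall, dist_zero_right] using hRbound z hz.le
    have hball : Leg p a b z ∈ Metric.ball (Leg p a b y) ε := by
      by_contra hnb
      exact hKne ⟨Leg p a b z, hmem, hnb⟩
    rw [mem_ball_iff_norm] at hball
    linarith

end Chunk5b
section Chunk5c
open Real Set Filter Topology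

set_option maxHeartbeats 1000000 in
lemma hasFDerivAt_hFun {p a b : ℝ} (hp : 2 < p) (ha : 0 < a) (hb0 : 0 ≤ b) (hb1 : b ≤ p - 1)
    (y : ℝ × ℝ) : HasFDerivAt (hFun p a b) (pairCLM (Leg p a b y)) y := by
  rw [hasFDerivAt_iff_isLittleO_nhds_zero]
  rw [Asymptotics.isLittleO_iff]
  intro C hC
  obtain ⟨δ, hδ0, hδ⟩ := Leg_near hp ha hb0 hb1 y (half_pos hC)
  filter_upwards [Metric.ball_mem_nhds (0 : ℝ×ℝ) hδ0] with w hw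
  rw [mem_ball_iff_norm, sub_zero] at hw
  set z := y + w with hzdef
  have hzy : ‖z - y‖ < δ := by rw [hzdef]; simpa using hw
  have hLeg : ‖Leg p a b z - Leg p a b y‖ ≤ C/2 := hδ z hzy
  set xs := Leg p a b y with hxs
  set xz := Leg p a b z with hxz
  -- identities
  have hys : hFun p a b y = Obj p a b y xs := hFun_eq hp ha hb0 y
  have hzs : hFun p a b z = Obj p a b z xz := hFun_eq hp ha hb0 z
  have hd1 : Obj p a b z xs - Obj p a b y xs = pairCLM xs w := by
    simp only [Obj, pairCLM_apply, hzdef, Prod.fst_add, Prod.snd_add]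
    ring
  have hd2 : Obj p a b z xz - Obj p a b y xz = pairCLM xz w := by
    simp only [Obj, pairCLM_apply, hzdef, Prod.fst_add, Prod.snd_add]
    ring
  have hl1 : Obj p a b z xs ≤ hFun p a b z := Obj_le_hFun hp ha hb0 z xs
  have hl2 : Obj p a b y xz ≤ hFun p a b y := Obj_le_hFun hp ha hb0 y xz
  have hE1 : 0 ≤ hFun p a b (y + w) - hFun p a b y - pairCLM xs w := by
    have := hl1
    rw [hzs] at this ⊢
    linarith [hd1, hd2]
  have hE2 : hFun p a b (y + w) - hFun p a b y - pairCLM xs w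
      ≤ pairCLM xz w - pairCLM xs w := by
    rw [← hzdef, hzs, hys]
    linarith [hd2, hl2]
  have hsub : pairCLM xz w - pairCLM xs w = (xz.1 - xs.1) * w.1 + (xz.2 - xs.2) * w.2 := by
    rw [pairCLM_apply, pairCLM_apply]
    ring
  have hb1' : |xz.1 - xs.1| ≤ C/2 := by
    refine le_trans ?_ hLeg
    rw [← Real.norm_eq_abs, show xz.1 - xs.1 = (xz - xs).1 from rfl]
    exact norm_fst_le _
  have hb2' : |xz.2 - xs.2| ≤ C/2 := by
    refine le_trans ?_ hLeg
    rw [← Real.norm_eq_abs, show xz.2 - xs.2 = (xz - xs).2 from rfl]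
    exact norm_snd_le _
  have hw1 : |w.1| ≤ ‖w‖ := by rw [← Real.norm_eq_abs]; exact norm_fst_le w
  have hw2 : |w.2| ≤ ‖w‖ := by rw [← Real.norm_eq_abs]; exact norm_snd_le w
  have hwn : 0 ≤ ‖w‖ := norm_nonneg w
  have hcross : (xz.1 - xs.1) * w.1 + (xz.2 - xs.2) * w.2 ≤ C * ‖w‖ := by
    have t1 : (xz.1 - xs.1) * w.1 ≤ (C/2) * ‖w‖ := by
      calc (xz.1 - xs.1) * w.1 ≤ |(xz.1 - xs.1) * w.1| := le_abs_self _
      _ = |xz.1 - xs.1| * |w.1| := abs_mul _ _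
      _ ≤ (C/2) * ‖w‖ := mul_le_mul hb1' hw1 (abs_nonneg _) (by linarith)
    have t2 : (xz.2 - xs.2) * w.2 ≤ (C/2) * ‖w‖ := by
      calc (xz.2 - xs.2) * w.2 ≤ |(xz.2 - xs.2) * w.2| := le_abs_self _
      _ = |xz.2 - xs.2| * |w.2| := abs_mul _ _
      _ ≤ (C/2) * ‖w‖ := mul_le_mul hb2' hw2 (abs_nonneg _) (by linarith)
    linarith
  rw [Real.norm_eq_abs, abs_of_nonneg hE1]
  rw [hsub] at hE2
  linarith

lemma differentiable_hFun {p a b : ℝ} (hp : 2 < p) (ha : 0 < a) (hb0 : 0 ≤ b)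
    (hb1 : b ≤ p - 1) : Differentiable ℝ (hFun p a b) :=
  fun y => (hasFDerivAt_hFun hp ha hb0 hb1 y).differentiableAt

lemma strictConvexOn_hFun {p a b : ℝ} (hp : 2 < p) (ha : 0 < a) (hb0 : 0 ≤ b)
    (hb1 : b ≤ p - 1) : StrictConvexOn ℝ Set.univ (hFun p a b) := by
  refine ⟨convex_univ, fun y₁ _ y₂ _ hne α β hα hβ hαβ => ?_⟩
  set z := α • y₁ + β • y₂ with hz
  set u := Leg p a b z with hu
  have hzval : hFun p a b z = Obj p a b z u := hFun_eq hp ha hb0 z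
  have hsplit : Obj p a b z u = α * Obj p a b y₁ u + β * Obj p a b y₂ u := by
    simp only [Obj, hz, Prod.fst_add, Prod.snd_add, Prod.smul_fst, Prod.smul_snd,
      smul_eq_mul]
    linear_combination (Ff p a b u) * hαβ
  have hle1 : Obj p a b y₁ u ≤ hFun p a b y₁ := Obj_le_hFun hp ha hb0 y₁ u
  have hle2 : Obj p a b y₂ u ≤ hFun p a b y₂ := Obj_le_hFun hp ha hb0 y₂ u
  simp only [smul_eq_mul]
  rcases lt_or_eq_of_le hle1 with h1 | h1
  · have : hFun p a b z = α * Obj p a b y₁ u + β * Obj p a b y₂ u := by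
      rw [hzval, hsplit]
    nlinarith
  rcases lt_or_eq_of_le hle2 with h2 | h2
  · have : hFun p a b z = α * Obj p a b y₁ u + β * Obj p a b y₂ u := by
      rw [hzval, hsplit]
    nlinarith
  · exfalso
    have hm1 : IsMaxOn (Obj p a b y₁) Set.univ u := by
      intro v _
      simp only [Set.mem_setOf_eq]
      rw [h1]
      exact Obj_le_hFun hp ha hb0 y₁ v
    have hm2 : IsMaxOn (Obj p a b y₂) Set.univ u := by
      intro v _
      simp only [Set.mem_setOf_eq]
      rw [h2]
      exact Obj_le_hFun hp ha hb0 y₂ v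
    have hg1 : Gg p a b u = y₁ := Gg_eq_of_isMaxOn hp hm1
    have hg2 : Gg p a b u = y₂ := Gg_eq_of_isMaxOn hp hm2
    exact hne (hg1 ▸ hg2)
end Chunk5c

/-- the Legendre transform `h` of `f` is differentiable and strictly convex on
`ℝ²`, and its gradient map `∇h` is the inverse of the gradient map `∇f`:
`∇h ∘ ∇f = id` and `∇f ∘ ∇h = id` on `ℝ²`. -/
theorem stmt_7 (p a b : ℝ) (hp : 2 < p) (ha : 0 < a) (hb0 : 0 ≤ b) (hb1 : b ≤ p - 1)
    (f h : ℝ × ℝ → ℝ)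
    (hf : ∀ q : ℝ × ℝ,
      f q = (a / p) * (|q.1| ^ p + 2 * b * |q.1| ^ (p / 2) * |q.2| ^ (p / 2) + |q.2| ^ p))
    (hh : ∀ q : ℝ × ℝ, h q = ⨆ st : ℝ × ℝ, (st.1 * q.1 + st.2 * q.2 - f st))
    (gradf gradh : ℝ × ℝ → ℝ × ℝ)
    (hgf : ∀ q : ℝ × ℝ, gradf q = (fderiv ℝ f q (1, 0), fderiv ℝ f q (0, 1)))
    (hgh : ∀ q : ℝ × ℝ, gradh q = (fderiv ℝ h q (1, 0), fderiv ℝ h q (0, 1))) :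
    Differentiable ℝ h ∧ StrictConvexOn ℝ (Set.univ : Set (ℝ × ℝ)) h ∧
      (∀ q : ℝ × ℝ, gradh (gradf q) = q) ∧ (∀ q : ℝ × ℝ, gradf (gradh q) = q) := by
  have hf' : f = Ff p a b := funext fun q => (hf q).trans rfl
  subst hf'
  have hh' : h = hFun p a b := funext fun q => (hh q).trans rfl
  subst hh'
  have hgradf : gradf = Gg p a b := funext fun q => by
    rw [hgf q, (hasFDerivAt_Ff hp q).fderiv]
    apply Prod.ext <;> simp [pairCLM_apply]
  have hgradh : gradh = Leg p a b := funext fun q => by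
    rw [hgh q, (hasFDerivAt_hFun hp ha hb0 hb1 q).fderiv]
    apply Prod.ext <;> simp [pairCLM_apply]
  refine ⟨differentiable_hFun hp ha hb0 hb1, strictConvexOn_hFun hp ha hb0 hb1, ?_, ?_⟩
  · intro q
    rw [hgradf, hgradh]
    exact Leg_Gg hp ha hb0 hb1 q
  · intro q
    rw [hgradh, hgradf]
    exact Gg_Leg hp ha hb0 q
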